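/- Let N ≥ 2 and let g : ℝ → ℝ be strictly convex and nonincreasing on the interval (0, 2]. Let 0 ≤ θ₁ < θ₂ < ⋯ < θ_N < 2π and set p_j := (cos θ_j, sin θ_j) ∈ ℝ², points on the unit circle. Then ∑_{1 ≤ j < j' ≤ N} g(‖p_j − p_{j'}‖) ≥ ∑_{1 ≤ j < j' ≤ N} g(2 sin(π(j' − j)/N)), and the inequality is strict unless all N cyclic angular gaps θ₂ − θ₁, …, θ_N − θ_{N−1}, 2π − θ_N + θ₁ are equal to 2π/N. -/

import Mathlib

open Real Finset Set
open Fin.NatCast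

/-- Periodic extension of a configuration `y` on the loop of circumference `2π`. -/
noncomputable def periodicExt {N : ℕ} (y : Fin N → ℝ) (k : ℕ) : ℝ :=
  if h : 0 < N then y ⟨k % N, Nat.mod_lt k h⟩ + 2 * Real.pi * (k / N : ℕ) else 0

/-- The `j`-th cyclic gap of the configuration `y` on the loop of circumference `2π`. -/
noncomputable def cyclicGap {N : ℕ} (y : Fin N → ℝ) (j : Fin N) : ℝ :=
  periodicExt y ((j : ℕ) + 1) - periodicExt y (j : ℕ)

/-- A configuration is congruent to the equidistant one iff all cyclic gaps are `2π/N`. -/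
def isEquidistant {N : ℕ} (y : Fin N → ℝ) : Prop :=
  ∀ j : Fin N, cyclicGap y j = 2 * Real.pi / N

/-- The point of the unit circle in the Euclidean plane with polar angle `t`. -/
noncomputable def circlePoint (t : ℝ) : EuclideanSpace ℝ (Fin 2) :=
  (WithLp.equiv 2 (Fin 2 → ℝ)).symm ![Real.cos t, Real.sin t]

lemma circlePoint_dist (a b : ℝ) :
    ‖circlePoint a - circlePoint b‖ = 2 * |Real.sin ((a - b) / 2)| := by
  have h := Real.sin_sq_eq_half_sub ((a - b) / 2)
  have hc := Real.cos_sub a b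
  rw [circlePoint, circlePoint, EuclideanSpace.norm_eq]
  have key : ∑ i : Fin 2, ‖((WithLp.equiv 2 (Fin 2 → ℝ)).symm ![Real.cos a, Real.sin a]
      - (WithLp.equiv 2 (Fin 2 → ℝ)).symm ![Real.cos b, Real.sin b]) i‖ ^ 2
      = (2 * |Real.sin ((a - b) / 2)|) ^ 2 := by
    simp only [Fin.sum_univ_two]
    norm_num [Real.norm_eq_abs, sq_abs]
    have h2 : Real.sin ((a-b)/2) ^ 2 = (1 - Real.cos (a - b)) / 2 := by
      rw [h]; rw [show 2 * ((a-b)/2) = a - b by ring]; ring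
    nlinarith [Real.sin_sq_add_cos_sq a, Real.sin_sq_add_cos_sq b, sq_abs (Real.sin ((a-b)/2))]
  rw [key, Real.sqrt_sq (by positivity)]

lemma doubleCount {N : ℕ} [NeZero N] (F : Fin N → Fin N → ℝ)
    (hsymm : ∀ j k, F j k = F k j) :
    ∑ m ∈ Finset.Ico 1 N, ∑ j : Fin N, F j (j + (m : Fin N))
      = 2 * ∑ p ∈ Finset.univ.filter (fun p : Fin N × Fin N => p.1 < p.2), F p.1 p.2 := by
  have hN : 0 < N := Nat.pos_of_ne_zero (NeZero.ne N)
  have step1 : ∑ m ∈ Finset.Ico 1 N, ∑ j : Fin N, F j (j + (m : Fin N))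
      = ∑ q ∈ (Finset.Ico 1 N) ×ˢ (Finset.univ : Finset (Fin N)),
          F q.2 (q.2 + ((q.1 : ℕ) : Fin N)) := by
    rw [Finset.sum_product]
  rw [step1]
  have step2 : ∑ q ∈ (Finset.Ico 1 N) ×ˢ (Finset.univ : Finset (Fin N)),
          F q.2 (q.2 + ((q.1 : ℕ) : Fin N))
      = ∑ p ∈ Finset.univ.filter (fun p : Fin N × Fin N => p.1 ≠ p.2), F p.1 p.2 := by
    refine Finset.sum_nbij' (fun q => (q.2, q.2 + ((q.1 : ℕ) : Fin N)))
      (fun p => (((p.2 - p.1 : Fin N) : ℕ), p.1)) ?_ ?_ ?_ ?_ ?_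
    · rintro ⟨m, j⟩ hq
      simp only [Finset.mem_product, Finset.mem_Ico] at hq
      simp only [Finset.mem_filter, Finset.mem_univ, true_and]
      intro h
      have h0 : ((m : ℕ) : Fin N) = 0 := by
        have := congrArg (fun x => x - j) h
        simpa using this.symm
      have hv : (((m : ℕ) : Fin N) : ℕ) = m % N := Fin.val_natCast m N
      rw [h0] at hv
      simp [Nat.mod_eq_of_lt hq.1.2] at hv
      omega
    · rintro ⟨i, k⟩ hp
      simp only [Finset.mem_filter, Finset.mem_univ, true_and] at hp
      simp only [Finset.mem_product, Finset.mem_Ico, Finset.mem_univ, and_true]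
      have hne : (k - i : Fin N) ≠ 0 := by
        intro h
        apply hp
        have h2 : k - i + i = 0 + i := by rw [h]
        rw [sub_add_cancel, zero_add] at h2
        exact h2.symm
      refine ⟨?_, Fin.is_lt _⟩
      by_contra h
      push_neg at h
      have : ((k - i : Fin N) : ℕ) = 0 := by omega
      exact hne (Fin.ext this)
    · rintro ⟨m, j⟩ hq
      simp only [Finset.mem_product, Finset.mem_Ico] at hq
      have h1 : (j + ((m : ℕ) : Fin N) - j) = ((m : ℕ) : Fin N) := by
        rw [add_sub_cancel_left]
      simp only [h1, Fin.val_natCast, Nat.mod_eq_of_lt hq.1.2]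
    · rintro ⟨i, k⟩ hp
      simp [Fin.cast_val_eq_self, add_sub_cancel]
    · rintro ⟨m, j⟩ hq
      rfl
  rw [step2]
  rw [← Finset.sum_filter_add_sum_filter_not
    (Finset.univ.filter (fun p : Fin N × Fin N => p.1 ≠ p.2)) (fun p => p.1 < p.2)]
  have e1 : (Finset.univ.filter (fun p : Fin N × Fin N => p.1 ≠ p.2)).filter
      (fun p => p.1 < p.2) = Finset.univ.filter (fun p : Fin N × Fin N => p.1 < p.2) := by
    rw [Finset.filter_filter]
    refine Finset.filter_congr (fun p _ => ?_)
    exact ⟨fun h => h.2, fun h => ⟨ne_of_lt h, h⟩⟩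
  have e2 : (Finset.univ.filter (fun p : Fin N × Fin N => p.1 ≠ p.2)).filter
      (fun p => ¬ p.1 < p.2) = Finset.univ.filter (fun p : Fin N × Fin N => p.2 < p.1) := by
    rw [Finset.filter_filter]
    refine Finset.filter_congr (fun p _ => ?_)
    constructor
    · rintro ⟨hne, hnlt⟩; exact lt_of_le_of_ne (not_lt.mp hnlt) (Ne.symm hne)
    · intro h; exact ⟨ne_of_gt h, not_lt.mpr h.le⟩
  rw [e1, e2]
  have e3 : ∑ p ∈ Finset.univ.filter (fun p : Fin N × Fin N => p.2 < p.1), F p.1 p.2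
      = ∑ p ∈ Finset.univ.filter (fun p : Fin N × Fin N => p.1 < p.2), F p.1 p.2 := by
    refine Finset.sum_nbij' Prod.swap Prod.swap ?_ ?_ ?_ ?_ ?_ <;>
      simp +contextual [Prod.swap, hsymm]
  rw [e3]; ring

lemma gStrictAnti {g : ℝ → ℝ} (hconv : StrictConvexOn ℝ (Set.Ioc 0 (2:ℝ)) g)
    (hanti : AntitoneOn g (Set.Ioc 0 (2:ℝ))) : StrictAntiOn g (Set.Ioc 0 (2:ℝ)) := by
  intro x hx y hy hxy
  rcases lt_or_eq_of_le (hanti hx hy hxy.le) with h | h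
  · exact h
  · exfalso
    have hz : (1/2 : ℝ) • x + (1/2 : ℝ) • y ∈ Set.Ioc 0 (2:ℝ) := by
      constructor
      · simp only [smul_eq_mul]; nlinarith [hx.1, hy.1]
      · simp only [smul_eq_mul]; nlinarith [hx.2, hy.2]
    have h2 := hconv.2 hx hy (ne_of_lt hxy) (by norm_num : (0:ℝ) < 1/2)
      (by norm_num : (0:ℝ) < 1/2) (by norm_num)
    have h3 : g ((1/2 : ℝ) • x + (1/2 : ℝ) • y) ≥ g y := by
      apply hanti hz hy
      simp only [smul_eq_mul]; nlinarith [hxy]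
    simp only [smul_eq_mul] at h2 h3
    linarith

lemma fStrictConvex {g : ℝ → ℝ} (hconv : StrictConvexOn ℝ (Set.Ioc 0 (2:ℝ)) g)
    (hanti : AntitoneOn g (Set.Ioc 0 (2:ℝ))) :
    StrictConvexOn ℝ (Set.Ioo 0 (2 * Real.pi)) (fun A => g (2 * Real.sin (A / 2))) := by
  have hpi := Real.pi_pos
  have hmem : ∀ A : ℝ, A ∈ Set.Ioo 0 (2 * Real.pi) → 2 * Real.sin (A / 2) ∈ Set.Ioc 0 (2:ℝ) := by
    intro A hA
    have h1 : 0 < Real.sin (A / 2) :=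
      Real.sin_pos_of_pos_of_lt_pi (by linarith [hA.1]) (by linarith [hA.2])
    exact ⟨by linarith, by linarith [Real.sin_le_one (A / 2)]⟩
  refine ⟨convex_Ioo _ _, ?_⟩
  intro x hx y hy hne a b ha hb hab
  simp only [smul_eq_mul]
  set z := a * x + b * y with hzdef
  have hz : z ∈ Set.Ioo 0 (2 * Real.pi) := by
    constructor
    · nlinarith [hx.1, hy.1]
    · nlinarith [hx.2, hy.2]
  have hsin := strictConcaveOn_sin_Icc.2 (x := x / 2) (y := y / 2)
    ⟨by linarith [hx.1], by linarith [hx.2]⟩ ⟨by linarith [hy.1], by linarith [hy.2]⟩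
    (by intro h; apply hne; field_simp at h; linarith) ha hb hab
  simp only [smul_eq_mul] at hsin
  have hz2 : a * (x / 2) + b * (y / 2) = z / 2 := by rw [hzdef]; ring
  rw [hz2] at hsin
  have hφx := hmem x hx
  have hφy := hmem y hy
  have hφz := hmem z hz
  have hcomb : a * (2 * Real.sin (x / 2)) + b * (2 * Real.sin (y / 2)) ∈ Set.Ioc 0 (2:ℝ) := by
    constructor
    · nlinarith [hφx.1, hφy.1]
    · nlinarith [hφx.2, hφy.2]
  have hlt : a * (2 * Real.sin (x / 2)) + b * (2 * Real.sin (y / 2)) < 2 * Real.sin (z / 2) := by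
    nlinarith
  rcases eq_or_ne (2 * Real.sin (x / 2)) (2 * Real.sin (y / 2)) with he | he
  · rw [← he] at hlt hcomb ⊢
    have hcombeq : a * (2 * Real.sin (x / 2)) + b * (2 * Real.sin (x / 2))
        = 2 * Real.sin (x / 2) := by linear_combination (2 * Real.sin (x / 2)) * hab
    rw [hcombeq] at hlt hcomb
    have hgt := gStrictAnti hconv hanti hcomb hφz hlt
    have heq : a * g (2 * Real.sin (x / 2)) + b * g (2 * Real.sin (x / 2))
        = g (2 * Real.sin (x / 2)) := by linear_combination (g (2 * Real.sin (x / 2))) * hab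
    linarith
  · have h1 : g (2 * Real.sin (z / 2))
        ≤ g (a * (2 * Real.sin (x / 2)) + b * (2 * Real.sin (y / 2))) :=
      hanti hcomb hφz hlt.le
    have h2 := hconv.2 hφx hφy he ha hb hab
    simp only [smul_eq_mul] at h2
    linarith

lemma jensenBlock {N : ℕ} (hN : 0 < N) {f : ℝ → ℝ} {s : Set ℝ} (hf : StrictConvexOn ℝ s f)
    (A : Fin N → ℝ) (hmemA : ∀ j, A j ∈ s) :
    ((N:ℝ) * f ((∑ j, A j) / N) ≤ ∑ j, f (A j)) ∧
    ((∃ j k, A j ≠ A k) → (N:ℝ) * f ((∑ j, A j) / N) < ∑ j, f (A j)) := by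
  have hNR : (0:ℝ) < N := by exact_mod_cast hN
  have hw : ∑ _j : Fin N, (N:ℝ)⁻¹ = 1 := by
    rw [Finset.sum_const, Finset.card_univ, Fintype.card_fin, nsmul_eq_mul]
    field_simp
  have hcomb : ∑ j : Fin N, (N:ℝ)⁻¹ • A j = (∑ j, A j) / N := by
    rw [← Finset.smul_sum, smul_eq_mul]; ring
  have hcombf : ∑ j : Fin N, (N:ℝ)⁻¹ • f (A j) = (∑ j, f (A j)) / N := by
    rw [← Finset.smul_sum, smul_eq_mul]; ring
  constructor
  · have h := hf.convexOn.map_sum_le (fun i _ => by positivity) hw (fun i _ => hmemA i)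
    rw [hcomb, hcombf] at h
    rw [show (N:ℝ) * f ((∑ j, A j) / N) ≤ ∑ j, f (A j)
        ↔ f ((∑ j, A j) / N) ≤ (∑ j, f (A j)) / N from by
      rw [le_div_iff₀ hNR]; constructor <;> intro h' <;> nlinarith]
    exact h
  · rintro ⟨j, k, hjk⟩
    have h := hf.map_sum_lt (fun i _ => by positivity) hw (fun i _ => hmemA i)
      ⟨j, Finset.mem_univ j, k, Finset.mem_univ k, hjk⟩
    rw [hcomb, hcombf] at h
    rw [show (N:ℝ) * f ((∑ j, A j) / N) < ∑ j, f (A j)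
        ↔ f ((∑ j, A j) / N) < (∑ j, f (A j)) / N from by
      rw [lt_div_iff₀ hNR]; constructor <;> intro h' <;> nlinarith]
    exact h

noncomputable def arcA {N : ℕ} [NeZero N] (θ : Fin N → ℝ) (m : ℕ) (j : Fin N) : ℝ :=
  θ (j + (m : Fin N)) - θ j + (if (j : ℕ) + m < N then 0 else 2 * Real.pi)

lemma val_add_natCast {N : ℕ} [NeZero N] (j : Fin N) (m : ℕ) (hmN : m < N) :
    (j + (m : Fin N)).val = if (j : ℕ) + m < N then (j : ℕ) + m else (j : ℕ) + m - N := by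
  have h1 : (j + (m : Fin N)).val = ((j : ℕ) + m) % N := by
    rw [Fin.add_def]
    simp [Fin.val_natCast, Nat.mod_eq_of_lt hmN]
  rw [h1]
  have hj := j.is_lt
  split_ifs with h
  · exact Nat.mod_eq_of_lt h
  · push_neg at h
    rw [Nat.mod_eq_sub_mod h, Nat.mod_eq_of_lt (by omega)]

lemma arc_mem {N : ℕ} [NeZero N] {θ : Fin N → ℝ} (hmono : StrictMono θ)
    (hmem : ∀ j, θ j ∈ Set.Ico 0 (2 * Real.pi)) {m : ℕ} (hm : 1 ≤ m) (hmN : m < N)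
    (j : Fin N) : arcA θ m j ∈ Set.Ioo 0 (2 * Real.pi) := by
  have hval := val_add_natCast j m hmN
  rw [arcA]
  by_cases h : (j : ℕ) + m < N
  · rw [if_pos h] at hval ⊢
    have hlt : j < j + (m : Fin N) := by
      rw [Fin.lt_def, hval]; omega
    have h1 := hmono hlt
    have h2 := (hmem j).1
    have h3 := (hmem (j + (m : Fin N))).2
    constructor <;> [linarith; linarith]
  · rw [if_neg h] at hval ⊢
    have hlt : j + (m : Fin N) < j := by
      rw [Fin.lt_def, hval]; omega
    have h1 := hmono hlt
    have h2 := (hmem (j + (m : Fin N))).1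
    have h3 := (hmem j).2
    constructor <;> [linarith; linarith]

lemma arc_sum {N : ℕ} [NeZero N] (θ : Fin N → ℝ) {m : ℕ} (hm : 1 ≤ m) (hmN : m < N) :
    ∑ j : Fin N, arcA θ m j = 2 * Real.pi * m := by
  have hN : 0 < N := Nat.pos_of_ne_zero (NeZero.ne N)
  have hsplit : ∑ j : Fin N, arcA θ m j
      = (∑ j : Fin N, (θ (j + (m : Fin N)) - θ j))
        + ∑ j : Fin N, (if (j : ℕ) + m < N then (0:ℝ) else 2 * Real.pi) := by
    simp only [arcA]
    rw [Finset.sum_add_distrib]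
  rw [hsplit]
  have h1 : ∑ j : Fin N, (θ (j + (m : Fin N)) - θ j) = 0 := by
    rw [Finset.sum_sub_distrib]
    rw [Fintype.sum_equiv (Equiv.addRight ((m : Fin N))) (fun j => θ (j + (m : Fin N))) θ
      (fun j => rfl)]
    ring
  rw [h1, zero_add]
  have h2 : ∑ j : Fin N, (if (j : ℕ) + m < N then (0:ℝ) else 2 * Real.pi)
      = ∑ k ∈ Finset.range N, (if k + m < N then (0:ℝ) else 2 * Real.pi) :=
    Fin.sum_univ_eq_sum_range (fun k => if k + m < N then (0:ℝ) else 2 * Real.pi) N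
  rw [h2, Finset.range_eq_Ico,
    ← Finset.sum_Ico_consecutive _ (Nat.zero_le (N - m)) (Nat.sub_le N m)]
  have h3 : ∑ k ∈ Finset.Ico 0 (N - m), (if k + m < N then (0:ℝ) else 2 * Real.pi) = 0 := by
    apply Finset.sum_eq_zero
    intro k hk
    rw [Finset.mem_Ico] at hk
    rw [if_pos (by omega)]
  have h4 : ∑ k ∈ Finset.Ico (N - m) N, (if k + m < N then (0:ℝ) else 2 * Real.pi)
      = (m : ℝ) * (2 * Real.pi) := by
    have hall : ∀ k ∈ Finset.Ico (N - m) N,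
        (if k + m < N then (0:ℝ) else 2 * Real.pi) = 2 * Real.pi := by
      intro k hk
      rw [Finset.mem_Ico] at hk
      rw [if_neg (by omega)]
    rw [Finset.sum_congr rfl hall, Finset.sum_const, Nat.card_Ico, nsmul_eq_mul]
    congr 1
    have : N - (N - m) = m := by omega
    rw [this]
  rw [h3, h4]
  ring

lemma chord_eq {N : ℕ} [NeZero N] {θ : Fin N → ℝ} (hmono : StrictMono θ)
    (hmem : ∀ j, θ j ∈ Set.Ico 0 (2 * Real.pi)) {m : ℕ} (hm : 1 ≤ m) (hmN : m < N)
    (j : Fin N) (g : ℝ → ℝ) :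
    g ‖circlePoint (θ j) - circlePoint (θ (j + (m : Fin N)))‖
      = g (2 * Real.sin (arcA θ m j / 2)) := by
  rw [circlePoint_dist]
  have hA := arc_mem hmono hmem hm hmN j
  have hsinpos : 0 < Real.sin (arcA θ m j / 2) :=
    Real.sin_pos_of_pos_of_lt_pi (by linarith [hA.1, Real.pi_pos]) (by linarith [hA.2])
  congr 2
  by_cases h : (j : ℕ) + m < N
  · have harc : arcA θ m j = θ (j + (m : Fin N)) - θ j := by rw [arcA, if_pos h]; ring
    rw [show (θ j - θ (j + (m : Fin N))) / 2 = -(arcA θ m j / 2) by rw [harc]; ring,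
      Real.sin_neg, abs_neg, abs_of_pos hsinpos]
  · have harc : arcA θ m j = θ (j + (m : Fin N)) - θ j + 2 * Real.pi := by
      rw [arcA, if_neg h]
    rw [show (θ j - θ (j + (m : Fin N))) / 2 = -(arcA θ m j / 2 - Real.pi) by
        rw [harc]; ring,
      Real.sin_neg, Real.sin_sub_pi, neg_neg, abs_of_pos hsinpos]

lemma rhs_eq {N : ℕ} [NeZero N] {m : ℕ} (hm : 1 ≤ m) (hmN : m < N) (j : Fin N) (g : ℝ → ℝ) :
    g (2 * Real.sin (Real.pi * (Nat.dist (j : ℕ) ((j + (m : Fin N)).val)) / N))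
      = g (2 * Real.sin (2 * Real.pi * m / N / 2)) := by
  have hN : 0 < N := Nat.pos_of_ne_zero (NeZero.ne N)
  have hNR : (0:ℝ) < N := by exact_mod_cast hN
  have hval := val_add_natCast j m hmN
  congr 2
  by_cases h : (j : ℕ) + m < N
  · rw [if_pos h] at hval
    rw [hval]
    have hd : Nat.dist (j : ℕ) ((j : ℕ) + m) = m := by simp [Nat.dist]
    rw [hd]
    congr 1
    ring
  · rw [if_neg h] at hval
    rw [hval]
    have hd : Nat.dist (j : ℕ) ((j : ℕ) + m - N) = N - m := by
      have := j.is_lt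
      simp only [Nat.dist]
      omega
    rw [hd]
    have hcast : ((N - m : ℕ) : ℝ) = (N : ℝ) - m := by
      rw [Nat.cast_sub hmN.le]
    rw [hcast]
    rw [show Real.pi * ((N:ℝ) - m) / N = Real.pi - Real.pi * m / N by field_simp,
      Real.sin_pi_sub]
    congr 1
    ring

lemma gap_eq {N : ℕ} [NeZero N] (hN2 : 2 ≤ N) (θ : Fin N → ℝ) (j : Fin N) :
    cyclicGap θ j = arcA θ 1 j := by
  have hN : 0 < N := by omega
  have hval := val_add_natCast j 1 (by omega : 1 < N)
  have hjlt := j.is_lt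
  rw [cyclicGap, periodicExt, periodicExt, dif_pos hN, dif_pos hN, arcA]
  have e0 : (⟨(j : ℕ) % N, Nat.mod_lt _ hN⟩ : Fin N) = j :=
    Fin.ext (Nat.mod_eq_of_lt j.is_lt)
  rw [e0, Nat.div_eq_of_lt j.is_lt]
  by_cases h : (j : ℕ) + 1 < N
  · have e1 : (⟨((j : ℕ) + 1) % N, Nat.mod_lt _ hN⟩ : Fin N) = j + ((1 : ℕ) : Fin N) := by
      apply Fin.ext
      rw [hval, if_pos h]
      exact Nat.mod_eq_of_lt h
    rw [e1, Nat.div_eq_of_lt h, if_pos h]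
    push_cast
    ring
  · have hjN : (j : ℕ) + 1 = N := by omega
    have e1 : (⟨((j : ℕ) + 1) % N, Nat.mod_lt _ hN⟩ : Fin N) = j + ((1 : ℕ) : Fin N) := by
      apply Fin.ext
      rw [hval, if_neg h]
      simp [hjN]
    rw [e1, if_neg h, show ((j : ℕ) + 1) / N = 1 by rw [hjN, Nat.div_self hN]]
    push_cast
    ring

set_option maxHeartbeats 1000000 in
/-- Let N ≥ 2 and let g : ℝ → ℝ be strictly convex and nonincreasing on
(0, 2]. Let 0 ≤ θ₁ < ⋯ < θ_N < 2π and p_j := (cos θ_j, sin θ_j) on the unit circle. Then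
∑_{j<j'} g(‖p_j − p_{j'}‖) ≥ ∑_{j<j'} g(2 sin(π(j'−j)/N)), and the inequality is strict
unless all N cyclic angular gaps equal 2π/N. -/
theorem circle_convex_chord_energy_min (N : ℕ) (hN : 2 ≤ N) (g : ℝ → ℝ)
    (hconv : StrictConvexOn ℝ (Set.Ioc 0 (2:ℝ)) g)
    (hanti : AntitoneOn g (Set.Ioc 0 (2:ℝ)))
    (θ : Fin N → ℝ) (hmono : StrictMono θ)
    (hmem : ∀ j, θ j ∈ Set.Ico 0 (2 * Real.pi)) :
    (∑ p ∈ Finset.univ.filter (fun p : Fin N × Fin N => p.1 < p.2),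
        g ‖circlePoint (θ p.1) - circlePoint (θ p.2)‖)
      ≥ (∑ p ∈ Finset.univ.filter (fun p : Fin N × Fin N => p.1 < p.2),
          g (2 * Real.sin (Real.pi * ((p.2 : ℕ) - (p.1 : ℕ) : ℕ) / N))) ∧
    (¬ isEquidistant θ →
      (∑ p ∈ Finset.univ.filter (fun p : Fin N × Fin N => p.1 < p.2),
          g ‖circlePoint (θ p.1) - circlePoint (θ p.2)‖)
        > (∑ p ∈ Finset.univ.filter (fun p : Fin N × Fin N => p.1 < p.2),
            g (2 * Real.sin (Real.pi * ((p.2 : ℕ) - (p.1 : ℕ) : ℕ) / N)))) := by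
  haveI : NeZero N := ⟨by omega⟩
  have hN0 : 0 < N := by omega
  have hNR : (0:ℝ) < N := by exact_mod_cast hN0
  have hfconv := fStrictConvex hconv hanti
  -- double counting for the chord energy
  have hdc1 : ∑ m ∈ Finset.Ico 1 N, ∑ j : Fin N,
        g ‖circlePoint (θ j) - circlePoint (θ (j + (m : Fin N)))‖
      = 2 * ∑ p ∈ Finset.univ.filter (fun p : Fin N × Fin N => p.1 < p.2),
          g ‖circlePoint (θ p.1) - circlePoint (θ p.2)‖ :=
    doubleCount (fun j k => g ‖circlePoint (θ j) - circlePoint (θ k)‖)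
      (fun j k => by simp only [norm_sub_rev])
  have hdc2 : ∑ m ∈ Finset.Ico 1 N, ∑ j : Fin N,
        g (2 * Real.sin (Real.pi * (Nat.dist (j : ℕ) (j + (m : Fin N)).val) / N))
      = 2 * ∑ p ∈ Finset.univ.filter (fun p : Fin N × Fin N => p.1 < p.2),
          g (2 * Real.sin (Real.pi * (Nat.dist (p.1 : ℕ) (p.2 : ℕ)) / N)) :=
    doubleCount (fun j k => g (2 * Real.sin (Real.pi * (Nat.dist (j : ℕ) (k : ℕ)) / N)))
      (fun j k => by simp only [Nat.dist_comm])
  -- the `Nat.dist` sum is the sum in the statement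
  have hS2 : ∑ p ∈ Finset.univ.filter (fun p : Fin N × Fin N => p.1 < p.2),
        g (2 * Real.sin (Real.pi * (Nat.dist (p.1 : ℕ) (p.2 : ℕ)) / N))
      = ∑ p ∈ Finset.univ.filter (fun p : Fin N × Fin N => p.1 < p.2),
          g (2 * Real.sin (Real.pi * ((p.2 : ℕ) - (p.1 : ℕ) : ℕ) / N)) := by
    refine Finset.sum_congr rfl (fun p hp => ?_)
    rw [Finset.mem_filter] at hp
    have hlt : (p.1 : ℕ) < (p.2 : ℕ) := hp.2
    have : Nat.dist (p.1 : ℕ) (p.2 : ℕ) = (p.2 : ℕ) - (p.1 : ℕ) := by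
      simp only [Nat.dist]; omega
    rw [this]
  -- per-block equalities
  have hblockL : ∀ m ∈ Finset.Ico 1 N,
      (∑ j : Fin N, g ‖circlePoint (θ j) - circlePoint (θ (j + (m : Fin N)))‖)
        = ∑ j : Fin N, g (2 * Real.sin (arcA θ m j / 2)) := by
    intro m hm
    rw [Finset.mem_Ico] at hm
    exact Finset.sum_congr rfl (fun j _ => chord_eq hmono hmem hm.1 hm.2 j g)
  have hblockR : ∀ m ∈ Finset.Ico 1 N,
      (∑ j : Fin N, g (2 * Real.sin (Real.pi * (Nat.dist (j : ℕ) (j + (m : Fin N)).val) / N)))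
        = (N : ℝ) * g (2 * Real.sin (2 * Real.pi * m / N / 2)) := by
    intro m hm
    rw [Finset.mem_Ico] at hm
    rw [Finset.sum_congr rfl (fun j _ => rhs_eq hm.1 hm.2 j g), Finset.sum_const,
      Finset.card_univ, Fintype.card_fin, nsmul_eq_mul]
  -- Jensen for each block
  have hmean : ∀ m : ℕ, 1 ≤ m → m < N →
      (∑ j : Fin N, arcA θ m j) / N = 2 * Real.pi * m / N := by
    intro m h1 h2
    rw [arc_sum θ h1 h2]
  have hjen : ∀ m ∈ Finset.Ico 1 N,
      (N : ℝ) * g (2 * Real.sin (2 * Real.pi * m / N / 2))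
        ≤ ∑ j : Fin N, g (2 * Real.sin (arcA θ m j / 2)) := by
    intro m hm
    rw [Finset.mem_Ico] at hm
    have h := (jensenBlock hN0 hfconv (arcA θ m) (arc_mem hmono hmem hm.1 hm.2)).1
    rw [hmean m hm.1 hm.2] at h
    exact h
  -- nonstrict inequality between the double sums
  have hle : ∑ m ∈ Finset.Ico 1 N, ∑ j : Fin N,
        g (2 * Real.sin (Real.pi * (Nat.dist (j : ℕ) (j + (m : Fin N)).val) / N))
      ≤ ∑ m ∈ Finset.Ico 1 N, ∑ j : Fin N,
        g ‖circlePoint (θ j) - circlePoint (θ (j + (m : Fin N)))‖ := by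
    refine Finset.sum_le_sum (fun m hm => ?_)
    rw [hblockL m hm, hblockR m hm]
    exact hjen m hm
  constructor
  · rw [← hS2]
    linarith [hle, hdc1, hdc2]
  · intro hneq
    -- not all first gaps are equal
    have hex : ∃ j k : Fin N, arcA θ 1 j ≠ arcA θ 1 k := by
      by_contra hall
      push_neg at hall
      apply hneq
      intro j
      rw [gap_eq hN θ j]
      have hsum : ∑ k : Fin N, arcA θ 1 k = 2 * Real.pi * ((1:ℕ):ℝ) :=
        arc_sum θ le_rfl (by omega)
      rw [Nat.cast_one] at hsum
      have hconst : ∑ k : Fin N, arcA θ 1 k = (N : ℝ) * arcA θ 1 j := by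
        rw [Finset.sum_congr rfl (fun k _ => hall k j), Finset.sum_const,
          Finset.card_univ, Fintype.card_fin, nsmul_eq_mul]
      rw [hconst] at hsum
      field_simp
      linarith [hsum]
    have h1mem : (1 : ℕ) ∈ Finset.Ico 1 N := by
      rw [Finset.mem_Ico]; omega
    have hlt : ∑ m ∈ Finset.Ico 1 N, ∑ j : Fin N,
          g (2 * Real.sin (Real.pi * (Nat.dist (j : ℕ) (j + (m : Fin N)).val) / N))
        < ∑ m ∈ Finset.Ico 1 N, ∑ j : Fin N,
          g ‖circlePoint (θ j) - circlePoint (θ (j + (m : Fin N)))‖ := by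
      refine Finset.sum_lt_sum (fun m hm => by
          rw [hblockL m hm, hblockR m hm]; exact hjen m hm) ⟨1, h1mem, ?_⟩
      rw [hblockL 1 h1mem, hblockR 1 h1mem]
      have h := (jensenBlock hN0 hfconv (arcA θ 1)
        (arc_mem hmono hmem le_rfl (by omega))).2 hex
      rw [hmean 1 le_rfl (by omega)] at h
      exact_mod_cast h
    rw [← hS2]
    linarith [hlt, hdc1, hdc2]
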